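/- With notation as in the martingale selection theorem on a finite probability space: if ξ is any martingale selector of V under some measure Q equivalent to P (ξ_t ∈ V_t a.s., ξ a Q-martingale), then ξ_t(ω) ∈ W_t(ω) for all t and ω, where W_T = cl V_T and W_t = cl(V_t ∩ ri(conv K(W_{t+1}, F_t))). -/

import Mathlib

open Finset Pointwise RealInnerProductSpace

set_option maxHeartbeats 1000000
set_option synthInstance.maxHeartbeats 400000

noncomputable section

abbrev E (d : ℕ) : Type := EuclideanSpace ℝ (Fin d)

section Helpers

variable {F : Type*} [NormedAddCommGroup F] [NormedSpace ℝ F]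

lemma riB1 {s : Set F} {x : F} (h : x ∈ intrinsicInterior ℝ s) :
    ∃ ε > 0, ∀ y ∈ affineSpan ℝ s, dist y x < ε → y ∈ s := by
  rw [mem_intrinsicInterior] at h
  obtain ⟨y, hy, rfl⟩ := h
  rw [mem_interior_iff_mem_nhds, Metric.mem_nhds_iff] at hy
  obtain ⟨ε, hε, hball⟩ := hy
  refine ⟨ε, hε, fun z hz hd => ?_⟩
  exact hball (show (⟨z, hz⟩ : affineSpan ℝ s) ∈ Metric.ball y ε by
    simpa [Metric.mem_ball, Subtype.dist_eq] using hd)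

lemma riB2 {s : Set F} {x : F} (hx : x ∈ affineSpan ℝ s) {ε : ℝ} (hε : 0 < ε)
    (h : ∀ y ∈ affineSpan ℝ s, dist y x < ε → y ∈ s) : x ∈ intrinsicInterior ℝ s := by
  rw [mem_intrinsicInterior]
  refine ⟨⟨x, hx⟩, ?_, rfl⟩
  rw [mem_interior_iff_mem_nhds, Metric.mem_nhds_iff]
  exact ⟨ε, hε, fun z hz => h z z.2 (by simpa [Metric.mem_ball, Subtype.dist_eq] using hz)⟩

lemma affineSpan_closure_eq [FiniteDimensional ℝ F] (s : Set F) :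
    affineSpan ℝ (closure s) = affineSpan ℝ s := by
  refine le_antisymm ?_ (affineSpan_mono ℝ subset_closure)
  rw [affineSpan_le]
  have h : closure s ⊆ closure (affineSpan ℝ s : Set F) := closure_mono (subset_affineSpan ℝ s)
  rwa [IsClosed.closure_eq (affineSpan ℝ s).closed_of_finiteDimensional] at h

lemma vectorSpan_closure_eq [FiniteDimensional ℝ F] (s : Set F) :
    vectorSpan ℝ (closure s) = vectorSpan ℝ s := by
  rw [← direction_affineSpan, affineSpan_closure_eq, direction_affineSpan]

lemma combo_mem_intrinsicInterior [FiniteDimensional ℝ F]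
    {Ω : Type*} [DecidableEq Ω] (s : Finset Ω) (hs : s.Nonempty)
    (C : Ω → Set F) (x : Ω → F) (lam : Ω → ℝ)
    (hx : ∀ i ∈ s, x i ∈ C i)
    (hri : ∀ i ∈ s, ∃ ε > 0, ∀ w ∈ vectorSpan ℝ (C i), ‖w‖ < ε → x i + w ∈ C i)
    (hlam : ∀ i ∈ s, 0 < lam i) (hlam1 : ∑ i ∈ s, lam i = 1) :
    (∑ i ∈ s, lam i • x i) ∈ intrinsicInterior ℝ (convexHull ℝ (⋃ i ∈ s, C i)) := by
  classical
  set S : Set F := ⋃ i ∈ s, C i with hS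
  set z : F := ∑ i ∈ s, lam i • x i with hz
  have hCS : ∀ i ∈ s, C i ⊆ S := fun i hi => Set.subset_biUnion_of_mem hi
  have hzC : z ∈ convexHull ℝ S :=
    (convex_convexHull ℝ S).sum_mem (fun i hi => (hlam i hi).le) hlam1
      (fun i hi => subset_convexHull ℝ S (hCS i hi (hx i hi)))
  -- totalize ε
  have hri' : ∀ i, ∃ ε, 0 < ε ∧ (i ∈ s → ∀ w ∈ vectorSpan ℝ (C i), ‖w‖ < ε → x i + w ∈ C i) := by
    intro i
    by_cases hi : i ∈ s
    · obtain ⟨ε, hε, h⟩ := hri i hi; exact ⟨ε, hε, fun _ => h⟩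
    · exact ⟨1, one_pos, fun h => absurd h hi⟩
  choose ε hεpos hε using hri'
  set i₀ : s := ⟨hs.choose, hs.choose_spec⟩ with hi₀
  set U : Ω → Submodule ℝ F := fun i => vectorSpan ℝ (C i) with hU
  -- the linear map
  obtain ⟨φ, hφ⟩ : ∃ φ : (((i : s) → U ↑i) × ((i : s) → ℝ)) →ₗ[ℝ] F,
      ∀ p, φ p = (∑ i : s, ((p.1 i : F))) + ∑ i : s, p.2 i • (x ↑i - x ↑i₀) := by
    refine ⟨(∑ i : s, (U ↑i).subtype ∘ₗ (LinearMap.proj i) ∘ₗ (LinearMap.fst ℝ _ _))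
      + ∑ i : s, (LinearMap.toSpanSingleton ℝ F (x ↑i - x ↑i₀)) ∘ₗ (LinearMap.proj i)
        ∘ₗ (LinearMap.snd ℝ _ _), ?_⟩
    intro p
    simp [LinearMap.toSpanSingleton_apply]
  have hmem_range : ∀ i ∈ s, ∀ a ∈ C i, a - x i₀ ∈ LinearMap.range φ := by
    intro i hi a ha
    set w1 : (j : s) → U ↑j := Pi.single (⟨i, hi⟩ : s)
      (⟨a - x i, vsub_mem_vectorSpan ℝ ha (hx i hi)⟩ : U i) with hw1
    set w2 : (j : s) → ℝ := Pi.single (⟨i, hi⟩ : s) (1 : ℝ) with hw2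
    refine ⟨(w1, w2), ?_⟩
    rw [hφ]
    have h1 : ∑ j : s, ((w1 j : F)) = a - x i := by
      rw [Finset.sum_eq_single (⟨i, hi⟩ : s)]
      · simp [hw1]
      · intro j _ hj; rw [hw1, Pi.single_eq_of_ne hj]; simp
      · intro h; exact absurd (mem_univ _) h
    have h2 : ∑ j : s, (w2 j) • (x ↑j - x ↑i₀) = x i - x ↑i₀ := by
      rw [Finset.sum_eq_single (⟨i, hi⟩ : s)]
      · simp [hw2]
      · intro j _ hj; rw [hw2, Pi.single_eq_of_ne hj]; simp
      · intro h; exact absurd (mem_univ _) h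
    rw [h1, h2]; abel
  have hrange : vectorSpan ℝ S ≤ LinearMap.range φ := by
    rw [vectorSpan_def, Submodule.span_le]
    rintro v hv
    obtain ⟨a, ha, b, hb, rfl⟩ := Set.mem_vsub.1 hv
    obtain ⟨i, hi, haC⟩ := Set.mem_iUnion₂.1 ha
    obtain ⟨j, hj, hbC⟩ := Set.mem_iUnion₂.1 hb
    have : a -ᵥ b = (a - x ↑i₀) - (b - x ↑i₀) := by rw [vsub_eq_sub]; abel
    rw [this]
    exact Submodule.sub_mem _ (hmem_range i hi a haC) (hmem_range j hj b hbC)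
  have hxS : ∀ i : s, x ↑i ∈ S := fun i => hCS i i.2 (hx i i.2)
  clear hmem_range
  obtain ⟨ψ, hψv⟩ : ∃ ψ : vectorSpan ℝ S →ₗ[ℝ] (((i : s) → U ↑i) × ((i : s) → ℝ)),
      ∀ v : vectorSpan ℝ S, φ (ψ v) = (v : F) := by
    have hrange' : ∀ p, φ p ∈ vectorSpan ℝ S := by
      intro p
      rw [hφ]
      refine Submodule.add_mem _ (Submodule.sum_mem _ fun i _ => ?_)
        (Submodule.sum_mem _ fun i _ => Submodule.smul_mem _ _ ?_)
      · exact vectorSpan_mono ℝ (hCS i i.2) (p.1 i).2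
      · exact vsub_mem_vectorSpan ℝ (hxS i) (hxS i₀)
    set φ' := φ.codRestrict (vectorSpan ℝ S) hrange' with hφ'def
    have hsurj : LinearMap.range φ' = ⊤ := by
      rw [LinearMap.range_eq_top]
      rintro ⟨v, hv⟩
      obtain ⟨p, hp⟩ := hrange hv
      exact ⟨p, Subtype.ext hp⟩
    obtain ⟨ψ, hψ⟩ := φ'.exists_rightInverse_of_surjective hsurj
    refine ⟨ψ, fun v => ?_⟩
    have h := LinearMap.congr_fun hψ v
    have h2 : φ' (ψ v) = v := h
    have h3 : (φ' (ψ v) : F) = φ (ψ v) := rfl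
    rw [h2] at h3
    exact h3.symm
  clear hrange
  -- a uniform bound on the coordinates of ψ
  have hbound : ∃ K : ℝ, 1 ≤ K ∧ ∀ v : vectorSpan ℝ S,
      (∀ i : s, ‖((ψ v).1 i : F)‖ ≤ K * ‖v‖) ∧ (∀ i : s, |(ψ v).2 i| ≤ K * ‖v‖) := by
    set cu : (i : s) → (vectorSpan ℝ S →L[ℝ] F) := fun i =>
      LinearMap.toContinuousLinearMap
        ((U ↑i).subtype ∘ₗ (LinearMap.proj i) ∘ₗ (LinearMap.fst ℝ _ _) ∘ₗ ψ) with hcu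
    set cc : (i : s) → (vectorSpan ℝ S →L[ℝ] ℝ) := fun i =>
      LinearMap.toContinuousLinearMap
        ((LinearMap.proj i) ∘ₗ (LinearMap.snd ℝ _ _) ∘ₗ ψ) with hcc
    refine ⟨1 + ∑ i : s, (‖cu i‖ + ‖cc i‖), ?_, ?_⟩
    · have : (0:ℝ) ≤ ∑ i : s, (‖cu i‖ + ‖cc i‖) :=
        Finset.sum_nonneg fun i _ =>
          add_nonneg (ContinuousLinearMap.opNorm_nonneg _) (ContinuousLinearMap.opNorm_nonneg _)
      linarith
    intro v
    have hsum : ∀ i : s, ‖cu i‖ + ‖cc i‖ ≤ ∑ j : s, (‖cu j‖ + ‖cc j‖) := by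
      intro i
      exact Finset.single_le_sum (f := fun j : s => ‖cu j‖ + ‖cc j‖)
        (fun j _ => add_nonneg (ContinuousLinearMap.opNorm_nonneg _)
          (ContinuousLinearMap.opNorm_nonneg _)) (mem_univ i)
    constructor
    · intro i
      have h1 : ((ψ v).1 i : F) = cu i v := by
        rw [hcu]; simp [LinearMap.coe_toContinuousLinearMap']
      rw [h1]
      refine le_trans ((cu i).le_opNorm v) ?_
      have h2 := hsum i
      have h3 : (0:ℝ) ≤ ‖cc i‖ := ContinuousLinearMap.opNorm_nonneg _
      have h4 : (0:ℝ) ≤ ‖v‖ := norm_nonneg _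
      nlinarith
    · intro i
      have h1 : (ψ v).2 i = cc i v := by
        rw [hcc]; simp [LinearMap.coe_toContinuousLinearMap']
      rw [← Real.norm_eq_abs, h1]
      refine le_trans ((cc i).le_opNorm v) ?_
      have h2 := hsum i
      have h3 : (0:ℝ) ≤ ‖cu i‖ := ContinuousLinearMap.opNorm_nonneg _
      have h4 : (0:ℝ) ≤ ‖v‖ := norm_nonneg _
      nlinarith
  obtain ⟨K, hK1, hKb⟩ := hbound
  have hK0 : (0:ℝ) < K := lt_of_lt_of_le one_pos hK1
  have hn0 : (0:ℝ) ≤ (s.card : ℝ) := Nat.cast_nonneg _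
  -- the radius
  obtain ⟨ε₀, hε₀, hε₀le⟩ : ∃ ε₀ > 0, ∀ i ∈ s,
      ε₀ ≤ min (lam i * ε i / (2*K)) (lam i / (2*((s.card : ℝ)+1)*K)) := by
    refine ⟨s.inf' hs (fun i => min (lam i * ε i / (2*K)) (lam i / (2*((s.card : ℝ)+1)*K))),
      ?_, fun i hi => Finset.inf'_le _ hi⟩
    show (0:ℝ) < _
    rw [Finset.lt_inf'_iff]
    intro i hi
    have h1 := hlam i hi
    have h2 := hεpos i
    have h3 : (0:ℝ) < (s.card : ℝ) + 1 := by linarith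
    have p1 : 0 < lam i * ε i / (2*K) := by positivity
    have p2 : 0 < lam i / (2*((s.card:ℝ)+1)*K) := by positivity
    exact lt_min p1 p2
  -- apply the criterion
  refine riB2 (subset_affineSpan ℝ _ hzC) hε₀ ?_
  intro y hy hdy
  have hspan_eq : vectorSpan ℝ (convexHull ℝ S) = vectorSpan ℝ S := by
    rw [← direction_affineSpan, affineSpan_convexHull, direction_affineSpan]
  have hvmem : y - z ∈ vectorSpan ℝ S := by
    have h1 : y -ᵥ z ∈ (affineSpan ℝ (convexHull ℝ S)).direction :=
      AffineSubspace.vsub_mem_direction hy (subset_affineSpan ℝ _ hzC)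
    rw [direction_affineSpan, hspan_eq, vsub_eq_sub] at h1
    exact h1
  set v : vectorSpan ℝ S := ⟨y - z, hvmem⟩ with hv
  have hnorm : ‖v‖ = ‖y - z‖ := rfl
  have hvn : ‖v‖ < ε₀ := by rw [hnorm, ← dist_eq_norm]; exact hdy
  obtain ⟨hKu, hKc⟩ := hKb v
  set u : (i : s) → F := fun i => ((ψ v).1 i : F) with hu
  set c : (i : s) → ℝ := fun i => (ψ v).2 i with hc
  have hφv : (∑ i : s, u i) + ∑ i : s, c i • (x ↑i - x ↑i₀) = y - z := by
    rw [hu, hc, ← hφ (ψ v), hψv v]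
  have hvnn : (0:ℝ) ≤ ‖v‖ := norm_nonneg _
  have hcsum : |∑ j : s, c j| ≤ (s.card : ℝ) * (K * ‖v‖) := by
    calc |∑ j : s, c j| ≤ ∑ j : s, |c j| := Finset.abs_sum_le_sum_abs _ _
      _ ≤ ∑ _j : s, K * ‖v‖ := Finset.sum_le_sum (fun j _ => hKc j)
      _ = (s.card : ℝ) * (K * ‖v‖) := by
          rw [Finset.sum_const, Finset.card_univ, Fintype.card_coe, nsmul_eq_mul]
  set μ : s → ℝ := fun i => lam ↑i + c i - (if i = i₀ then ∑ j : s, c j else 0) with hμ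
  have hμge : ∀ i : s, lam ↑i / 2 ≤ μ i := by
    intro i
    have hd := hε₀le ↑i i.2
    have hv2 : ‖v‖ < lam ↑i / (2*((s.card:ℝ)+1)*K) :=
      lt_of_lt_of_le hvn (le_trans hd (min_le_right _ _))
    have h5 : ((s.card:ℝ)+1) * K * ‖v‖ < ((s.card:ℝ)+1) * K * (lam ↑i/(2*((s.card:ℝ)+1)*K)) :=
      mul_lt_mul_of_pos_left hv2 (by positivity)
    have h6 : ((s.card:ℝ)+1) * K * (lam ↑i/(2*((s.card:ℝ)+1)*K)) = lam ↑i / 2 := by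
      field_simp
    have h7 : |c i| ≤ K * ‖v‖ := hKc i
    have h8 := abs_le.1 h7
    have h9 := abs_le.1 hcsum
    rw [hμ]
    beta_reduce
    split_ifs with hii <;> nlinarith
  have hμpos : ∀ i : s, 0 < μ i := fun i =>
    lt_of_lt_of_le (by have := hlam ↑i i.2; linarith) (hμge i)
  have hμ1 : ∑ i : s, μ i = 1 := by
    rw [hμ]
    rw [Finset.sum_sub_distrib, Finset.sum_add_distrib]
    rw [Finset.sum_ite_eq' Finset.univ i₀ (fun _ => ∑ j : s, c j)]
    rw [Finset.sum_coe_sort s lam, hlam1]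
    simp
  set yi : (i : s) → F := fun i => x ↑i + (μ i)⁻¹ • u i with hyi
  have hyiC : ∀ i : s, yi i ∈ C ↑i := by
    intro i
    refine hε ↑i i.2 _ ?_ ?_
    · rw [hu]
      have : (μ i)⁻¹ • ((ψ v).1 i : F) = (((μ i)⁻¹ • (ψ v).1 i : U ↑i) : F) := by
        simp
      rw [this]
      exact ((μ i)⁻¹ • (ψ v).1 i).2
    · have h7 : ‖u i‖ ≤ K * ‖v‖ := hKu i
      have hd := hε₀le ↑i i.2
      have hv1 : ‖v‖ < lam ↑i * ε ↑i / (2*K) :=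
        lt_of_lt_of_le hvn (le_trans hd (min_le_left _ _))
      have h5 : K * ‖v‖ < K * (lam ↑i * ε ↑i / (2*K)) := mul_lt_mul_of_pos_left hv1 hK0
      have h6 : K * (lam ↑i * ε ↑i / (2*K)) = lam ↑i * ε ↑i / 2 := by field_simp
      have h8 := hμge i
      have h9 := hμpos i
      have h10 := hlam ↑i i.2
      have h11 := hεpos (↑i : Ω)
      rw [norm_smul, Real.norm_eq_abs, abs_inv, abs_of_pos h9]
      rw [inv_mul_lt_iff₀ h9]
      have h12 : lam ↑i / 2 * ε ↑i ≤ μ i * ε ↑i := mul_le_mul_of_nonneg_right h8 h11.le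
      rw [h6] at h5
      have h13 : lam ↑i * ε ↑i / 2 = lam ↑i / 2 * ε ↑i := by ring
      rw [h13] at h5
      exact lt_of_le_of_lt h7 (lt_of_lt_of_le h5 h12)
  have hyeq : ∑ i : s, μ i • yi i = y := by
    have hsum1 : ∑ i : s, μ i • yi i = (∑ i : s, μ i • x ↑i) + ∑ i : s, u i := by
      rw [← Finset.sum_add_distrib]
      refine Finset.sum_congr rfl (fun i _ => ?_)
      rw [hyi]
      simp only
      rw [smul_add, smul_inv_smul₀ (hμpos i).ne']
    have hsum2 : ∑ i : s, μ i • x ↑i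
        = z + ((∑ i : s, c i • x ↑i) - (∑ j : s, c j) • x ↑i₀) := by
      rw [hμ]
      simp only [sub_smul, add_smul, ite_smul, zero_smul]
      rw [Finset.sum_sub_distrib, Finset.sum_add_distrib]
      rw [Finset.sum_ite_eq' Finset.univ i₀ (fun i => (∑ j : s, c j) • x ↑i)]
      rw [Finset.sum_coe_sort s (fun i => lam i • x i), ← hz]
      simp [add_sub_assoc]
    have hsum3 : (∑ i : s, c i • x ↑i) - (∑ j : s, c j) • x ↑i₀ + ∑ i : s, u i = y - z := by
      rw [← hφv, Finset.sum_smul]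
      have : ∑ i : s, c i • (x ↑i - x ↑i₀)
          = (∑ i : s, c i • x ↑i) - ∑ i : s, c i • x ↑i₀ := by
        rw [← Finset.sum_sub_distrib]
        exact Finset.sum_congr rfl (fun i _ => smul_sub _ _ _)
      rw [this]
      abel
    rw [hsum1, hsum2]
    rw [add_assoc, hsum3]
    abel
  rw [← hyeq]
  exact (convex_convexHull ℝ S).sum_mem (fun i _ => (hμpos i).le) hμ1
    (fun i _ => subset_convexHull ℝ S (hCS ↑i i.2 (hyiC i)))

lemma add_mem_affineSpan_of_mem_vectorSpan {F : Type*} [NormedAddCommGroup F]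
    [NormedSpace ℝ F] {s : Set F} {x w : F}
    (hx : x ∈ affineSpan ℝ s) (hw : w ∈ vectorSpan ℝ s) : x + w ∈ affineSpan ℝ s := by
  have h := AffineSubspace.vadd_mem_of_mem_direction
    (show w ∈ (affineSpan ℝ s).direction by rwa [direction_affineSpan]) hx
  rwa [vadd_eq_add, add_comm] at h

lemma dist_add_self_left' {F : Type*} [NormedAddCommGroup F] (x w : F) :
    dist (x + w) x = ‖w‖ := by rw [dist_eq_norm, add_sub_cancel_left]

end Helpers

/-- Every martingale selector ξ of V (under any Q equivalent to P)
takes values in the recursively defined sets W_t. -/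
theorem martingale_selector_mem_W {Ω : Type} [Fintype Ω] [DecidableEq Ω] [Nonempty Ω]
    {d : ℕ} (T : ℕ)
    (P : Ω → ℝ) (hP : ∀ ω, 0 < P ω) (hP1 : ∑ ω, P ω = 1)
    (atom : ℕ → Ω → Finset Ω)
    (hmem : ∀ t ω, ω ∈ atom t ω)
    (hpart : ∀ t ω ω', ω' ∈ atom t ω → atom t ω' = atom t ω)
    (hrefine : ∀ t ω, atom (t + 1) ω ⊆ atom t ω)
    (h0 : ∀ ω, atom 0 ω = Finset.univ)
    (hT : ∀ ω, atom T ω = {ω})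
    (V : ℕ → Ω → Set (E d))
    (hVne : ∀ t ω, (V t ω).Nonempty)
    (hVconv : ∀ t ω, Convex ℝ (V t ω))
    (hVopen : ∀ t ω, intrinsicInterior ℝ (V t ω) = V t ω)
    (hVadapted : ∀ t ω ω', ω' ∈ atom t ω → V t ω' = V t ω)
    (W : ℕ → Ω → Set (E d))
    (hWT : ∀ ω, W T ω = closure (V T ω))
    (hWt : ∀ t, t < T → ∀ ω, W t ω = closure (V t ω ∩
        intrinsicInterior ℝ (convexHull ℝ (⋃ ω' ∈ atom t ω, W (t + 1) ω'))))
    (ξ : ℕ → Ω → E d) (Q : Ω → ℝ)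
    (hQpos : ∀ ω, 0 < Q ω) (hQ1 : ∑ ω, Q ω = 1)
    (hadapted : ∀ t ω ω', t ≤ T → ω' ∈ atom t ω → ξ t ω' = ξ t ω)
    (hsel : ∀ t ω, t ≤ T → ξ t ω ∈ V t ω)
    (hmart : ∀ t ω, t < T →
        (∑ ω' ∈ atom t ω, Q ω')⁻¹ • ∑ ω' ∈ atom t ω, Q ω' • ξ (t + 1) ω' = ξ t ω) :
    ∀ t ω, t ≤ T → ξ t ω ∈ W t ω := by
  suffices key : ∀ k t, t + k = T → ∀ ω, ξ t ω ∈ W t ω ∧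
      ∃ ε > 0, ∀ w ∈ vectorSpan ℝ (W t ω), ‖w‖ < ε → ξ t ω + w ∈ W t ω by
    intro t ω ht
    obtain ⟨k, hk⟩ := Nat.le.dest ht
    exact (key k t hk ω).1
  intro k
  induction k with
  | zero =>
    intro t ht ω
    have htT : t = T := by omega
    subst htT
    have hξV : ξ t ω ∈ V t ω := hsel t ω le_rfl
    constructor
    · rw [hWT ω]; exact subset_closure hξV
    · obtain ⟨ε, hε, hV⟩ := riB1 (show ξ t ω ∈ intrinsicInterior ℝ (V t ω) by
        rw [hVopen]; exact hξV)
      refine ⟨ε, hε, fun w hw hwn => ?_⟩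
      rw [hWT ω, vectorSpan_closure_eq] at hw
      have h1 : ξ t ω + w ∈ affineSpan ℝ (V t ω) :=
        add_mem_affineSpan_of_mem_vectorSpan (subset_affineSpan ℝ _ hξV) hw
      have h2 : ξ t ω + w ∈ V t ω := hV _ h1 (by rw [dist_add_self_left']; exact hwn)
      rw [hWT ω]
      exact subset_closure h2
  | succ k ih =>
    intro t ht ω
    have htT : t < T := by omega
    have ht1 : (t + 1) + k = T := by omega
    -- the martingale step: ξ t ω is a strict convex combination of the ξ (t+1) ω'
    set A : Finset Ω := atom t ω with hA
    have hAne : A.Nonempty := ⟨ω, hmem t ω⟩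
    set S : Set (E d) := ⋃ ω' ∈ A, W (t + 1) ω' with hSdef
    have hQsum : 0 < ∑ ω' ∈ A, Q ω' := Finset.sum_pos (fun ω' _ => hQpos ω') hAne
    set lamQ : Ω → ℝ := fun ω' => (∑ ω'' ∈ A, Q ω'')⁻¹ * Q ω' with hlamQ
    have hlampos : ∀ ω' ∈ A, 0 < lamQ ω' := fun ω' _ =>
      mul_pos (inv_pos.2 hQsum) (hQpos ω')
    have hlam1 : ∑ ω' ∈ A, lamQ ω' = 1 := by
      rw [hlamQ, ← Finset.mul_sum]
      exact inv_mul_cancel₀ hQsum.ne'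
    have hzsum : ∑ ω' ∈ A, lamQ ω' • ξ (t + 1) ω' = ξ t ω := by
      rw [← hmart t ω htT, Finset.smul_sum]
      exact Finset.sum_congr rfl (fun ω' _ => by rw [hlamQ]; rw [mul_smul])
    have hξG : ξ t ω ∈ intrinsicInterior ℝ (convexHull ℝ S) := by
      rw [← hzsum]
      exact combo_mem_intrinsicInterior A hAne (fun ω' => W (t + 1) ω')
        (fun ω' => ξ (t + 1) ω') lamQ
        (fun ω' _ => (ih (t + 1) ht1 ω').1)
        (fun ω' _ => (ih (t + 1) ht1 ω').2)
        hlampos hlam1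
    have hξV : ξ t ω ∈ V t ω := hsel t ω htT.le
    have hWeq : W t ω = closure (V t ω ∩ intrinsicInterior ℝ (convexHull ℝ S)) :=
      hWt t htT ω
    constructor
    · rw [hWeq]; exact subset_closure ⟨hξV, hξG⟩
    · obtain ⟨ε₁, hε₁, hV⟩ := riB1 (show ξ t ω ∈ intrinsicInterior ℝ (V t ω) by
        rw [hVopen]; exact hξV)
      obtain ⟨ε₂, hε₂, hG⟩ := riB1 hξG
      refine ⟨min ε₁ ε₂, lt_min hε₁ hε₂, fun w hw hwn => ?_⟩
      have hw1 : ‖w‖ < ε₁ := lt_of_lt_of_le hwn (min_le_left _ _)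
      have hw2 : ‖w‖ < ε₂ := lt_of_lt_of_le hwn (min_le_right _ _)
      rw [hWeq, vectorSpan_closure_eq] at hw
      have hwV : w ∈ vectorSpan ℝ (V t ω) :=
        vectorSpan_mono ℝ Set.inter_subset_left hw
      have hwC : w ∈ vectorSpan ℝ (convexHull ℝ S) :=
        vectorSpan_mono ℝ (Set.inter_subset_right.trans intrinsicInterior_subset) hw
      have h1 : ξ t ω + w ∈ V t ω := by
        refine hV _ (add_mem_affineSpan_of_mem_vectorSpan (subset_affineSpan ℝ _ hξV) hwV) ?_
        rw [dist_add_self_left']; exact hw1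
      have h2 : ξ t ω + w ∈ intrinsicInterior ℝ (convexHull ℝ S) := by
        have hξC : ξ t ω ∈ convexHull ℝ S := intrinsicInterior_subset hξG
        refine riB2 (add_mem_affineSpan_of_mem_vectorSpan (subset_affineSpan ℝ _ hξC) hwC)
          (show (0:ℝ) < ε₂ - ‖w‖ by linarith) ?_
        intro y hy hdy
        refine hG y hy ?_
        have htri : dist y (ξ t ω) ≤ dist y (ξ t ω + w) + dist (ξ t ω + w) (ξ t ω) :=
          dist_triangle _ _ _
        rw [dist_add_self_left'] at htri
        linarith
      rw [hWeq]
      exact subset_closure ⟨h1, h2⟩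

end
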